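/- For every positive integer n there is no nonzero complex matrix M, indexed by functions Fin n → Fin d × Fin d, such that M is positive semidefinite, its partial transpose M^Γ is positive semidefinite, and trace(M · (I − Φ)^{⊗n}) = 0, where (I − Φ)^{⊗n} is the n-fold tensor power of I − Φ. -/

import Mathlib

open Matrix Kronecker ComplexOrder

/-- Projector onto the maximally entangled state: Φ[(i,j),(k,l)] = 1/d if i=j and k=l. -/
noncomputable def Phi (d : ℕ) : Matrix (Fin d × Fin d) (Fin d × Fin d) ℂ :=
  fun p q => if p.1 = p.2 ∧ q.1 = q.2 then ((d : ℂ))⁻¹ else 0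

/-- Sitewise partial transpose on n pairs of systems:
M^Γ[(p,q),(r,s)] = M[(p,s),(r,q)], identifying x : Fin n → Fin d × Fin d with (x₁, x₂). -/
def ptransN (d n : ℕ) (M : Matrix (Fin n → Fin d × Fin d) (Fin n → Fin d × Fin d) ℂ) :
    Matrix (Fin n → Fin d × Fin d) (Fin n → Fin d × Fin d) ℂ :=
  fun x y => M (fun t => ((x t).1, (y t).2)) (fun t => ((y t).1, (x t).2))

/-- The n-fold tensor power of I − Φ. -/
noncomputable def IsubPhiPow (d n : ℕ) :
    Matrix (Fin n → Fin d × Fin d) (Fin n → Fin d × Fin d) ℂ :=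
  fun x y => ∏ t : Fin n, ((1 : Matrix (Fin d × Fin d) (Fin d × Fin d) ℂ) - Phi d) (x t) (y t)

section Aux

open Finset

/-- The swap matrix. -/
noncomputable def Sw (d : ℕ) : Matrix (Fin d × Fin d) (Fin d × Fin d) ℂ :=
  fun p q => if p = (q.2, q.1) then 1 else 0

lemma Sw_mul_Sw (d : ℕ) : Sw d * Sw d = 1 := by
  ext p q
  rw [Matrix.mul_apply]
  simp only [Sw]
  rw [Finset.sum_eq_single (q.2, q.1)]
  · simp [Matrix.one_apply]
  · intro b _ hb
    rw [if_neg hb, mul_zero]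
  · intro h; exact absurd (Finset.mem_univ _) h

lemma Sw_conjTranspose (d : ℕ) : (Sw d)ᴴ = Sw d := by
  ext p q
  simp only [Matrix.conjTranspose_apply, Sw]
  by_cases hpq : p = (q.2, q.1)
  · have hq : q = (p.2, p.1) := by rw [hpq]
    rw [if_pos hpq, if_pos hq, star_one]
  · have hq : ¬ q = (p.2, p.1) := fun h => hpq (by rw [h])
    rw [if_neg hq, if_neg hpq, star_zero]

lemma A_sq (d : ℕ) :
    ((1 : Matrix (Fin d × Fin d) (Fin d × Fin d) ℂ) - Sw d) * (1 - Sw d)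
      = (1 - Sw d) + (1 - Sw d) := by
  simp only [Matrix.sub_mul, Matrix.mul_sub, Matrix.one_mul, Matrix.mul_one, Sw_mul_Sw]
  abel

lemma R_psd (d : ℕ) (hd : 2 ≤ d) :
    ((d : ℂ)⁻¹ • ((1 : Matrix (Fin d × Fin d) (Fin d × Fin d) ℂ) - Sw d)).PosSemidef := by
  have hd0 : (d : ℂ) ≠ 0 := Nat.cast_ne_zero.mpr (by omega)
  set A : Matrix (Fin d × Fin d) (Fin d × Fin d) ℂ := 1 - Sw d with hA
  set a : ℝ := Real.sqrt (2 * d)⁻¹ with ha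
  have hAH : Aᴴ = A := by
    rw [hA, Matrix.conjTranspose_sub, Matrix.conjTranspose_one, Sw_conjTranspose]
  have key : (d : ℂ)⁻¹ • A = ((a : ℂ) • A)ᴴ * ((a : ℂ) • A) := by
    have haa : (a : ℂ) * (a : ℂ) = (((2 * d : ℝ))⁻¹ : ℝ) := by
      rw [← Complex.ofReal_mul, ha, Real.mul_self_sqrt (by positivity)]
    rw [Matrix.conjTranspose_smul, hAH, Matrix.smul_mul, Matrix.mul_smul, smul_smul]
    have hstar : star ((a : ℝ) : ℂ) * (a : ℂ) = (((2 * d : ℝ))⁻¹ : ℝ) := by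
      rw [Complex.star_def, Complex.conj_ofReal, haa]
    rw [hstar, A_sq, ← two_smul ℂ A, smul_smul]
    congr 1
    push_cast
    field_simp
  rw [key]
  exact Matrix.posSemidef_conjTranspose_mul_self _

lemma smulone_psd {m : Type*} [Fintype m] [DecidableEq m] {c : ℂ} (hc : 0 ≤ c) :
    (c • (1 : Matrix m m ℂ)).PosSemidef := by
  have h : c • (1 : Matrix m m ℂ) = Matrix.diagonal (fun _ => c) := by
    ext i j
    simp only [Matrix.smul_apply, Matrix.one_apply, Matrix.diagonal, Matrix.of_apply,
      smul_eq_mul]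
    split_ifs <;> simp
  rw [h]
  exact Matrix.PosSemidef.diagonal (fun _ => hc)

lemma psd_fac {m : Type*} [Fintype m] [DecidableEq m] {B : Matrix m m ℂ}
    (h : B.PosSemidef) : ∃ C : Matrix m m ℂ, B = Cᴴ * C := by
  open MatrixOrder in
  obtain ⟨C, hC⟩ := CStarAlgebra.nonneg_iff_eq_star_mul_self.mp h.nonneg
  exact ⟨C, by rw [hC, Matrix.star_eq_conjTranspose]⟩

/-- sitewise tensor product of PSD matrices is PSD -/
lemma tensor_psd (d n : ℕ) (B : Fin n → Matrix (Fin d × Fin d) (Fin d × Fin d) ℂ)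
    (hB : ∀ t, (B t).PosSemidef) :
    (Matrix.of fun x y : Fin n → Fin d × Fin d => ∏ t, B t (x t) (y t)).PosSemidef := by
  choose C hC using fun t => psd_fac (hB t)
  have key : (Matrix.of fun x y : Fin n → Fin d × Fin d => ∏ t, B t (x t) (y t))
      = (Matrix.of fun z y : Fin n → Fin d × Fin d => ∏ t, C t (z t) (y t))ᴴ *
        (Matrix.of fun z y : Fin n → Fin d × Fin d => ∏ t, C t (z t) (y t)) := by
    ext x y
    simp only [Matrix.mul_apply, Matrix.conjTranspose_apply, Matrix.of_apply]
    calc ∏ t, B t (x t) (y t)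
        = ∏ t, ∑ k, star (C t k (x t)) * C t k (y t) := by
          refine Finset.prod_congr rfl fun t _ => ?_
          rw [hC t]
          simp [Matrix.mul_apply, Matrix.conjTranspose_apply]
      _ = ∑ z : Fin n → Fin d × Fin d, ∏ t, (star (C t (z t) (x t)) * C t (z t) (y t)) := by
          rw [Finset.prod_univ_sum, Fintype.piFinset_univ]
      _ = ∑ z : Fin n → Fin d × Fin d,
            star (∏ t, C t (z t) (x t)) * ∏ t, C t (z t) (y t) := by
          refine Finset.sum_congr rfl fun z _ => ?_
          rw [star_prod, Finset.prod_mul_distrib]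
  rw [key]
  exact Matrix.posSemidef_conjTranspose_mul_self _

lemma entry_eq (d : ℕ) (a b : Fin d × Fin d) :
    ((1 : Matrix (Fin d × Fin d) (Fin d × Fin d) ℂ) - Phi d) (a.1, b.2) (b.1, a.2)
      = ((1 - (d : ℂ)⁻¹) • (1 : Matrix (Fin d × Fin d) (Fin d × Fin d) ℂ)
          + (d : ℂ)⁻¹ • (1 - Sw d)) a b := by
  obtain ⟨a1, a2⟩ := a
  obtain ⟨b1, b2⟩ := b
  simp only [Matrix.sub_apply, Matrix.add_apply, Matrix.smul_apply, Matrix.one_apply, Phi, Sw,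
    smul_eq_mul, Prod.mk.injEq]
  have hC1 : (a1 = b1 ∧ b2 = a2) ↔ (a1 = b1 ∧ a2 = b2) := by
    constructor <;> exact fun ⟨u, v⟩ => ⟨u, v.symm⟩
  have hC2 : (a1 = b2 ∧ b1 = a2) ↔ (a1 = b2 ∧ a2 = b1) := by
    constructor <;> exact fun ⟨u, v⟩ => ⟨u, v.symm⟩
  rw [if_congr hC1 rfl rfl, if_congr hC2 rfl rfl]
  split_ifs <;> ring

lemma ptrans_IsubPhiPow (d n : ℕ) :
    ptransN d n (IsubPhiPow d n)
      = Matrix.of fun x y : Fin n → Fin d × Fin d =>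
          ∏ t, ((1 - (d : ℂ)⁻¹) • (1 : Matrix (Fin d × Fin d) (Fin d × Fin d) ℂ)
                + (d : ℂ)⁻¹ • (1 - Sw d)) (x t) (y t) := by
  ext x y
  simp only [ptransN, IsubPhiPow, Matrix.of_apply]
  exact Finset.prod_congr rfl fun t _ => entry_eq d (x t) (y t)

lemma decomp (d n : ℕ) (hd : 2 ≤ d) :
    ∃ RR : Matrix (Fin n → Fin d × Fin d) (Fin n → Fin d × Fin d) ℂ,
      RR.PosSemidef ∧
      ptransN d n (IsubPhiPow d n) = ((1 : ℂ) - (d : ℂ)⁻¹) ^ n • 1 + RR := by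
  classical
  have hc : (0 : ℂ) ≤ 1 - (d : ℂ)⁻¹ := by
    rw [show (1 : ℂ) - (d : ℂ)⁻¹ = (((1 - (d : ℝ)⁻¹ : ℝ)) : ℂ) by push_cast; ring]
    rw [Complex.zero_le_real]
    have h1 : (1 : ℝ) ≤ (d : ℝ) := by exact_mod_cast (by omega : 1 ≤ d)
    have := inv_le_one_of_one_le₀ h1
    linarith
  set P : Matrix (Fin d × Fin d) (Fin d × Fin d) ℂ := (1 - (d : ℂ)⁻¹) • 1 with hP
  set Q : Matrix (Fin d × Fin d) (Fin d × Fin d) ℂ := (d : ℂ)⁻¹ • (1 - Sw d) with hQ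
  set F : Finset (Fin n) → Matrix (Fin n → Fin d × Fin d) (Fin n → Fin d × Fin d) ℂ :=
    fun S => Matrix.of fun x y => ∏ t, (if t ∈ S then P else Q) (x t) (y t) with hF
  have hFpsd : ∀ S, (F S).PosSemidef := by
    intro S
    refine tensor_psd d n _ fun t => ?_
    split_ifs
    · exact smulone_psd hc
    · exact R_psd d hd
  have hexp : ptransN d n (IsubPhiPow d n) = ∑ S ∈ Finset.univ.powerset, F S := by
    rw [ptrans_IsubPhiPow]
    ext x y
    rw [Matrix.sum_apply]
    simp only [Matrix.of_apply, hF]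
    calc ∏ t, (P + Q) (x t) (y t)
        = ∏ t, (P (x t) (y t) + Q (x t) (y t)) := rfl
      _ = ∑ S ∈ Finset.univ.powerset,
            (∏ t ∈ S, P (x t) (y t)) * ∏ t ∈ Finset.univ \ S, Q (x t) (y t) :=
          Finset.prod_add _ _ _
      _ = ∑ S ∈ Finset.univ.powerset, ∏ t, (if t ∈ S then P else Q) (x t) (y t) := by
          refine Finset.sum_congr rfl fun S hS => ?_
          rw [← Finset.prod_mul_prod_compl S fun t => (if t ∈ S then P else Q) (x t) (y t)]
          congr 1
          · exact Finset.prod_congr rfl fun t ht => by rw [if_pos ht]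
          · rw [← Finset.compl_eq_univ_sdiff]
            exact (Finset.prod_congr rfl fun t ht => by
              rw [if_neg (Finset.mem_compl.mp ht)]).symm
  have huniv : F Finset.univ = ((1 : ℂ) - (d : ℂ)⁻¹) ^ n • 1 := by
    ext x y
    simp only [hF, Matrix.of_apply, Finset.mem_univ, if_true, hP, Matrix.smul_apply,
      Matrix.one_apply, smul_eq_mul]
    rw [Finset.prod_mul_distrib, Finset.prod_const, Finset.card_univ, Fintype.card_fin,
      Finset.prod_boole]
    congr 1
    by_cases h : x = y
    · simp [h]
    · rw [if_neg h, if_neg]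
      intro hall
      exact h (funext fun t => hall t (Finset.mem_univ t))
  refine ⟨∑ S ∈ Finset.univ.powerset.erase Finset.univ, F S, ?_, ?_⟩
  · exact Finset.sum_induction F Matrix.PosSemidef (fun a b ha hb => ha.add hb)
      Matrix.PosSemidef.zero (fun S _ => hFpsd S)
  · rw [hexp, ← Finset.add_sum_erase _ F (Finset.mem_powerset_self _), huniv]

lemma trace_ptrans (d n : ℕ)
    (M N : Matrix (Fin n → Fin d × Fin d) (Fin n → Fin d × Fin d) ℂ) :
    (ptransN d n M * ptransN d n N).trace = (M * N).trace := by
  have expand : ∀ A B : Matrix (Fin n → Fin d × Fin d) (Fin n → Fin d × Fin d) ℂ,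
      (A * B).trace = ∑ p : (Fin n → Fin d × Fin d) × (Fin n → Fin d × Fin d),
        A p.1 p.2 * B p.2 p.1 := by
    intro A B
    rw [Matrix.trace]
    simp only [Matrix.diag_apply, Matrix.mul_apply]
    rw [← Finset.univ_product_univ, Finset.sum_product]
  rw [expand, expand]
  set e : ((Fin n → Fin d × Fin d) × (Fin n → Fin d × Fin d)) →
      ((Fin n → Fin d × Fin d) × (Fin n → Fin d × Fin d)) :=
    fun p => (fun t => ((p.1 t).1, (p.2 t).2), fun t => ((p.2 t).1, (p.1 t).2)) with he
  have hinv : Function.Involutive e := by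
    intro p
    refine Prod.ext ?_ ?_ <;> funext t <;> simp [he]
  rw [← Equiv.sum_comp (hinv.toPerm e) (fun p => M p.1 p.2 * N p.2 p.1)]
  refine Finset.sum_congr rfl fun p _ => ?_
  simp only [Function.Involutive.coe_toPerm, he, ptransN]

lemma psd_diag_nonneg {m : Type*} [Fintype m] [DecidableEq m] {A : Matrix m m ℂ}
    (hA : A.PosSemidef) (i : m) : 0 ≤ A i i := by
  have h2 := hA.dotProduct_mulVec_nonneg (Pi.single i 1)
  simpa [Matrix.mulVec, dotProduct, Pi.single_apply] using h2

lemma psd_trace_nonneg {m : Type*} [Fintype m] [DecidableEq m] {A : Matrix m m ℂ}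
    (hA : A.PosSemidef) : 0 ≤ A.trace :=
  Finset.sum_nonneg fun i _ => psd_diag_nonneg hA i

lemma psd_eq_zero_of_trace {m : Type*} [Fintype m] [DecidableEq m] {A : Matrix m m ℂ}
    (hA : A.PosSemidef) (h : A.trace = 0) : A = 0 := by
  have hdiag : ∀ i, A i i = 0 := fun i =>
    (Finset.sum_eq_zero_iff_of_nonneg (fun i _ => psd_diag_nonneg hA i)).mp h i
      (Finset.mem_univ i)
  have hcol : ∀ j, A *ᵥ Pi.single j 1 = 0 := by
    intro j
    apply (hA.dotProduct_mulVec_zero_iff _).mp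
    have := hdiag j
    simpa [Matrix.mulVec, dotProduct, Pi.single_apply] using this
  ext i j
  have := congrFun (hcol j) i
  simpa [Matrix.mulVec, dotProduct, Pi.single_apply] using this

lemma trace_mul_psd_nonneg {m : Type*} [Fintype m] [DecidableEq m] {A B : Matrix m m ℂ}
    (hA : A.PosSemidef) (hB : B.PosSemidef) : 0 ≤ (A * B).trace := by
  obtain ⟨C, rfl⟩ := psd_fac hB
  rw [← Matrix.mul_assoc, Matrix.trace_mul_cycle]
  exact psd_trace_nonneg (hA.mul_mul_conjTranspose_same C)

lemma ptransN_invol (d n : ℕ)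
    (M : Matrix (Fin n → Fin d × Fin d) (Fin n → Fin d × Fin d) ℂ) :
    ptransN d n (ptransN d n M) = M := by
  ext x y
  simp [ptransN]

end Aux

/-- There is no nonzero PPT matrix M with trace(M · (I − Φ)^{⊗n}) = 0. -/
theorem stmt_2 (d n : ℕ) (hd : 2 ≤ d) (hn : 1 ≤ n) :
    ¬ ∃ M : Matrix (Fin n → Fin d × Fin d) (Fin n → Fin d × Fin d) ℂ,
      M ≠ 0 ∧ M.PosSemidef ∧ (ptransN d n M).PosSemidef ∧
        (M * IsubPhiPow d n).trace = 0 := by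
  rintro ⟨M, hM0, hMpsd, hPT, htr⟩
  obtain ⟨RR, hRR, hdec⟩ := decomp d n hd
  have htr2 : (ptransN d n M * ptransN d n (IsubPhiPow d n)).trace = 0 := by
    rw [trace_ptrans]; exact htr
  rw [hdec, Matrix.mul_add, Matrix.trace_add, Matrix.mul_smul, Matrix.mul_one,
    Matrix.trace_smul, smul_eq_mul] at htr2
  have hc : (0 : ℂ) ≤ 1 - (d : ℂ)⁻¹ := by
    rw [show (1 : ℂ) - (d : ℂ)⁻¹ = (((1 - (d : ℝ)⁻¹ : ℝ)) : ℂ) by push_cast; ring]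
    rw [Complex.zero_le_real]
    have h1 : (1 : ℝ) ≤ (d : ℝ) := by exact_mod_cast (by omega : 1 ≤ d)
    have := inv_le_one_of_one_le₀ h1
    linarith
  have hcn : (0 : ℂ) ≤ ((1 : ℂ) - (d : ℂ)⁻¹) ^ n := pow_nonneg hc n
  have ht1 : 0 ≤ (ptransN d n M).trace := psd_trace_nonneg hPT
  have ht2 : 0 ≤ (ptransN d n M * RR).trace := trace_mul_psd_nonneg hPT hRR
  have h1 : ((1 : ℂ) - (d : ℂ)⁻¹) ^ n * (ptransN d n M).trace = 0 := by
    have hb : 0 ≤ ((1 : ℂ) - (d : ℂ)⁻¹) ^ n * (ptransN d n M).trace := mul_nonneg hcn ht1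
    have heq : ((1 : ℂ) - (d : ℂ)⁻¹) ^ n * (ptransN d n M).trace
        = -(ptransN d n M * RR).trace := eq_neg_of_add_eq_zero_left htr2
    exact le_antisymm (heq ▸ neg_nonpos.mpr ht2) hb
  have hcne : ((1 : ℂ) - (d : ℂ)⁻¹) ^ n ≠ 0 := by
    apply pow_ne_zero
    rw [sub_ne_zero]
    intro h
    field_simp at h
    have hd1 : d = 1 := by exact_mod_cast h
    omega
  have htrM : (ptransN d n M).trace = 0 := by
    rcases mul_eq_zero.mp h1 with h | h
    · exact absurd h hcne
    · exact h
  have hMΓ0 : ptransN d n M = 0 := psd_eq_zero_of_trace hPT htrM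
  apply hM0
  have h := congrArg (ptransN d n) hMΓ0
  rw [ptransN_invol] at h
  rw [h]
  ext x y
  simp [ptransN]
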